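/- arXiv:0904.2925 — 3 statements merged into one kernel-verified Lean document; each statement's English description precedes it below -/
import Mathlib

section
/- Let ω : ℕ → A be an infinite word over a finite alphabet A. Then the abelian complexity function ρ^ab_ω is bounded (i.e., there exists M such that ρ^ab_ω(n) ≤ M for all n) if and only if ω is C-balanced for some positive integer C. -/
/-- The factor of the infinite word `ω` of length `n` starting at position `i`. -/
def factor {A : Type*} (ω : ℕ → A) (i n : ℕ) : List A :=
  (List.range n).map fun j => ω (i + j)

/-- The abelian complexity of `ω`: the number of abelian equivalence classes of
factors of `ω` of length `n`. -/
noncomputable def abelianComplexity {A : Type*} [DecidableEq A] (ω : ℕ → A) (n : ℕ) : ℕ :=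
  Set.ncard {c : A → ℕ | ∃ i : ℕ, c = fun a => (factor ω i n).count a}

/-- `ω` is `C`-balanced: for every letter `a` and all factors of equal length,
the numbers of occurrences of `a` differ by at most `C`. -/
def IsCBalanced {A : Type*} [DecidableEq A] (ω : ℕ → A) (C : ℕ) : Prop :=
  ∀ a : A, ∀ n i j : ℕ,
    |((factor ω i n).count a : ℤ) - ((factor ω j n).count a : ℤ)| ≤ (C : ℤ)

lemma factor_succ_left {A : Type*} (ω : ℕ → A) (i n : ℕ) :
    factor ω i (n+1) = ω i :: factor ω (i+1) n := by
  simp only [factor, List.range_succ_eq_map, List.map_cons, Nat.add_zero, List.map_map]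
  congr 1
  apply List.map_congr_left
  intro j _
  simp [Function.comp]
  ring_nf

lemma factor_succ_right {A : Type*} (ω : ℕ → A) (i n : ℕ) :
    factor ω i (n+1) = factor ω i n ++ [ω (i+n)] := by
  simp [factor, List.range_succ]

lemma factor_length {A : Type*} (ω : ℕ → A) (i n : ℕ) :
    (factor ω i n).length = n := by simp [factor]

lemma count_step {A : Type*} [DecidableEq A] (ω : ℕ → A) (a : A) (n i : ℕ) :
    |((factor ω (i+1) n).count a : ℤ) - ((factor ω i n).count a : ℤ)| ≤ 1 := by
  have h1 : (factor ω i (n+1)).count a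
      = (factor ω (i+1) n).count a + (if ω i = a then 1 else 0) := by
    rw [factor_succ_left, List.count_cons]
    simp
  have h2 : (factor ω i (n+1)).count a
      = (factor ω i n).count a + (if ω (i+n) = a then 1 else 0) := by
    rw [factor_succ_right, List.count_append]
    simp [List.count_cons]
  split_ifs at h1 h2 <;> (rw [abs_le]; omega)

lemma ivt_up (f : ℕ → ℤ) (h : ∀ i, |f (i+1) - f i| ≤ 1) (v : ℤ) :
    ∀ d i, f i ≤ v → v ≤ f (i + d) → ∃ k, f k = v := by
  intro d
  induction d with
  | zero => intro i h1 h2; exact ⟨i, le_antisymm h1 h2⟩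
  | succ d ih =>
    intro i h1 h2
    by_cases hc : v ≤ f (i + d)
    · exact ih i h1 hc
    · refine ⟨i + d + 1, ?_⟩
      have := h (i + d)
      rw [abs_le] at this
      have h2' : v ≤ f (i + d + 1) := h2
      omega

lemma ivt_down (f : ℕ → ℤ) (h : ∀ i, |f (i+1) - f i| ≤ 1) (v : ℤ) :
    ∀ d i, f (i + d) ≤ v → v ≤ f i → ∃ k, f k = v := by
  intro d
  induction d with
  | zero => intro i h1 h2; exact ⟨i, le_antisymm h1 h2⟩
  | succ d ih =>
    intro i h1 h2
    by_cases hc : v ≤ f (i + 1)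
    · have he : i + 1 + d = i + (d + 1) := by omega
      exact ih (i + 1) (by rw [he]; exact h1) hc
    · refine ⟨i, ?_⟩
      have := h i
      rw [abs_le] at this
      have h1' : f (i + d + 1) ≤ v := h1
      omega

lemma ivt (f : ℕ → ℤ) (h : ∀ i, |f (i+1) - f i| ≤ 1) (i j : ℕ) (v : ℤ)
    (h1 : f i ≤ v) (h2 : v ≤ f j) : ∃ k, f k = v := by
  rcases le_total i j with hij | hij
  · obtain ⟨d, rfl⟩ := Nat.exists_eq_add_of_le hij
    exact ivt_up f h v d i h1 h2
  · obtain ⟨d, rfl⟩ := Nat.exists_eq_add_of_le hij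
    exact ivt_down f h v d j h1 h2

lemma V_finite {A : Type*} [Fintype A] [DecidableEq A] (ω : ℕ → A) (n : ℕ) :
    {c : A → ℕ | ∃ i : ℕ, c = fun a => (factor ω i n).count a}.Finite := by
  apply Set.Finite.subset (Finset.finite_toSet (Fintype.piFinset fun _ : A => Finset.range (n+1)))
  rintro c ⟨i, rfl⟩
  simp only [Finset.coe_sort_coe, Finset.mem_coe, Fintype.mem_piFinset, Finset.mem_range]
  intro a
  have := List.count_le_length (l := factor ω i n) (a := a)
  rw [factor_length] at this
  omega

/-- The abelian complexity of an infinite word over a finite alphabet is bounded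
iff the word is `C`-balanced for some positive integer `C`. -/
theorem abelianComplexity_bounded_iff_balanced
    {A : Type*} [Fintype A] [DecidableEq A] (ω : ℕ → A) :
    (∃ M : ℕ, ∀ n : ℕ, abelianComplexity ω n ≤ M) ↔
      ∃ C : ℕ, 0 < C ∧ IsCBalanced ω C := by
  constructor
  · rintro ⟨M, hM⟩
    refine ⟨M + 1, Nat.succ_pos M, ?_⟩
    intro a n i j
    suffices key : ∀ i j : ℕ,
        ((factor ω i n).count a : ℤ) - ((factor ω j n).count a : ℤ) ≤ (M : ℤ) by
      have k1 := key i j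
      have k2 := key j i
      rw [abs_sub_le_iff]
      push_cast
      constructor <;> omega
    intro i j
    by_contra hcon
    push_neg at hcon
    set g : ℕ → ℤ := fun k => ((factor ω k n).count a : ℤ) with hg
    set V : Set (A → ℕ) := {c : A → ℕ | ∃ i : ℕ, c = fun a => (factor ω i n).count a}
      with hV
    have hfin : V.Finite := V_finite ω n
    have hrange : Set.range g = (fun c : A → ℕ => (c a : ℤ)) '' V := by
      ext x
      constructor
      · rintro ⟨k, rfl⟩
        exact ⟨fun b => (factor ω k n).count b, ⟨k, rfl⟩, rfl⟩
      · rintro ⟨c, ⟨k, rfl⟩, rfl⟩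
        exact ⟨k, rfl⟩
    have hrfin : (Set.range g).Finite := by rw [hrange]; exact hfin.image _
    have hsub : ↑(Finset.Icc (g j) (g j + M)) ⊆ Set.range g := by
      intro v hv
      rw [Finset.mem_coe, Finset.mem_Icc] at hv
      have ei : g i = ((factor ω i n).count a : ℤ) := rfl
      have ej : g j = ((factor ω j n).count a : ℤ) := rfl
      exact ivt g (fun k => count_step ω a n k) j i v hv.1 (by omega)
    have h1 : (Set.range g).ncard ≤ V.ncard := by
      rw [hrange]; exact Set.ncard_image_le hfin
    have h2 : M + 1 ≤ (Set.range g).ncard := by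
      calc M + 1 = (Finset.Icc (g j) (g j + M)).card := by
            rw [Int.card_Icc]; omega
        _ = (↑(Finset.Icc (g j) (g j + M)) : Set ℤ).ncard :=
            (Set.ncard_coe_finset _).symm
        _ ≤ (Set.range g).ncard := Set.ncard_le_ncard hsub hrfin
    have h3 : abelianComplexity ω n = V.ncard := rfl
    have := hM n
    omega
  · rintro ⟨C, _, hbal⟩
    refine ⟨(2*C+1)^(Fintype.card A), fun n => ?_⟩
    set c0 : A → ℕ := fun a => (factor ω 0 n).count a with hc0
    have hsub : {c : A → ℕ | ∃ i : ℕ, c = fun a => (factor ω i n).count a}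
        ⊆ ↑(Fintype.piFinset fun a => Finset.Icc (c0 a - C) (c0 a + C)) := by
      rintro c ⟨i, rfl⟩
      rw [Finset.mem_coe, Fintype.mem_piFinset]
      intro a
      rw [Finset.mem_Icc]
      have := hbal a n i 0
      rw [abs_le] at this
      have hc : c0 a = (factor ω 0 n).count a := rfl
      constructor <;> omega
    calc abelianComplexity ω n
        ≤ (↑(Fintype.piFinset fun a => Finset.Icc (c0 a - C) (c0 a + C)) : Set (A → ℕ)).ncard :=
          Set.ncard_le_ncard hsub (Finset.finite_toSet _)
      _ = (Fintype.piFinset fun a => Finset.Icc (c0 a - C) (c0 a + C)).card :=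
          Set.ncard_coe_finset _
      _ = ∏ a : A, (Finset.Icc (c0 a - C) (c0 a + C)).card := Fintype.card_piFinset _
      _ ≤ (2*C+1)^(Fintype.card A) := by
          rw [← Finset.card_univ]
          exact Finset.prod_le_pow_card _ _ _ (fun a _ => by rw [Nat.card_Icc]; omega)
end

section
/- Let ω' ∈ {0,1}^ℕ be any aperiodic infinite binary word, and let ω be the image of ω' under the morphism f defined by f(0) = 012 and f(1) = 021 (so ω is an infinite word over {0,1,2}). Then ρ^ab_ω(n) = 3 for all n ≥ 1. -/
set_option maxHeartbeats 1600000

/-- `ω` is ultimately periodic. -/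
def UltimatelyPeriodic {A : Type*} (ω : ℕ → A) : Prop :=
  ∃ m p : ℕ, 0 < p ∧ ∀ n : ℕ, m ≤ n → ω (n + p) = ω n

lemma persist (ω' : ℕ → Fin 2) (q : ℕ) (hq : 0 < q) (b : Fin 2)
    (h : ∀ i, ω' i = b → ω' (i + q) = b) : UltimatelyPeriodic ω' := by
  have hup : ∀ r k k', k ≤ k' → ω' (r + k * q) = b → ω' (r + k' * q) = b := by
    intro r k k' hk hb
    induction k', hk using Nat.le_induction with
    | base => exact hb
    | succ k' hk ih =>
      have := h (r + k' * q) ih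
      rwa [show r + k' * q + q = r + (k' + 1) * q by ring] at this
  classical
  set M : ℕ := (Finset.range q).sup
    (fun r => if hr : ∃ k, ω' (r + k * q) = b then Nat.find hr else 0) with hM
  refine ⟨q * (M + 1), q, hq, fun n hn => ?_⟩
  set r := n % q with hrdef
  set k := n / q with hkdef
  have hn1 : n = r + k * q := (Nat.mod_add_div' n q).symm
  have hrq : r < q := Nat.mod_lt _ hq
  have hkM : M < k := by
    by_contra hc
    push_neg at hc
    have h1 : k * q ≤ M * q := Nat.mul_le_mul_right q hc
    have h2 : n < q + M * q := by
      calc n = r + k * q := hn1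
        _ ≤ r + M * q := Nat.add_le_add_left h1 r
        _ < q + M * q := Nat.add_lt_add_right hrq _
    have h3 : q + M * q ≤ n := by
      calc q + M * q = q * (M + 1) := by ring
        _ ≤ n := hn
    exact Nat.lt_irrefl n (Nat.lt_of_lt_of_le h2 h3)
  by_cases hb : ω' n = b
  · rw [h n hb, hb]
  · by_cases hb' : ω' (n + q) = b
    · exfalso
      have hex : ∃ k0, ω' (r + k0 * q) = b :=
        ⟨k + 1, by rw [show r + (k + 1) * q = n + q by rw [hn1]; ring]; exact hb'⟩
      have hNr : ω' (r + (Nat.find hex) * q) = b := Nat.find_spec hex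
      have hle := Finset.le_sup (f := fun r => if hr : ∃ k, ω' (r + k * q) = b then Nat.find hr else 0)
        (Finset.mem_range.mpr hrq)
      rw [← hM] at hle
      rw [dif_pos hex] at hle
      have : ω' (r + k * q) = b := hup r (Nat.find hex) k (le_trans hle hkM.le) hNr
      rw [← hn1] at this
      exact hb this
    · have key : ∀ b' x y : Fin 2, x ≠ b' → y ≠ b' → x = y := by decide
      exact key b _ _ hb' hb

lemma exists_ge (ω' : ℕ → Fin 2) (hap : ¬ UltimatelyPeriodic ω') (b : Fin 2) (N : ℕ) :
    ∃ m, N ≤ m ∧ ω' m = b := by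
  by_contra h
  push_neg at h
  refine hap ⟨N, 1, one_pos, fun n hn => ?_⟩
  have h1 := h n hn
  have h2 := h (n + 1) (by omega)
  have key : ∀ b' x y : Fin 2, x ≠ b' → y ≠ b' → x = y := by decide
  exact key b _ _ h2 h1

lemma exists_flip (ω' : ℕ → Fin 2) (hap : ¬ UltimatelyPeriodic ω') (q : ℕ) (hq : 0 < q)
    (b : Fin 2) : ∃ i, ω' i = b ∧ ω' (i + q) ≠ b := by
  by_contra h
  push_neg at h
  exact hap (persist ω' q hq b h)

lemma factor_add (ω : ℕ → Fin 3) (i n : ℕ) :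
    factor ω 0 (i + n) = factor ω 0 i ++ factor ω i n := by
  unfold factor
  rw [List.range_add, List.map_append, List.map_map]
  simp [Function.comp]

lemma count_add (ω : ℕ → Fin 3) (i n : ℕ) (a : Fin 3) :
    (factor ω 0 i).count a + (factor ω i n).count a = (factor ω 0 (i + n)).count a := by
  rw [factor_add, List.count_append]

lemma Pform (ω' : ℕ → Fin 2) (ω : ℕ → Fin 3)
    (hω : ∀ i : ℕ,
      ω (3 * i) = 0 ∧
      ω (3 * i + 1) = (if ω' i = 0 then 1 else 2) ∧
      ω (3 * i + 2) = (if ω' i = 0 then 2 else 1)) (m : ℕ) :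
    (factor ω 0 m).count 0 = m / 3 + (if m % 3 = 0 then 0 else 1) ∧
    (factor ω 0 m).count 1 = m / 3 + (if m % 3 = 2 ∧ ω' (m / 3) = 0 then 1 else 0) ∧
    (factor ω 0 m).count 2 = m / 3 + (if m % 3 = 2 ∧ ω' (m / 3) = 1 then 1 else 0) := by
  have fin2 : ∀ b : Fin 2, b = 0 ∨ b = 1 := by decide
  induction m with
  | zero => simp [factor]
  | succ m ih =>
    obtain ⟨ih0, ih1, ih2⟩ := ih
    have hstep : ∀ a : Fin 3, (factor ω 0 (m + 1)).count a
        = (factor ω 0 m).count a + if ω m = a then 1 else 0 := by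
      intro a
      simp [factor, List.range_succ, List.count_singleton', eq_comm]
    have hm3 : m % 3 = 0 ∨ m % 3 = 1 ∨ m % 3 = 2 := by omega
    have hj := hω (m / 3)
    rcases hm3 with hm | hm | hm
    · have hωm : ω m = 0 := by
        have := hj.1
        rwa [show 3 * (m / 3) = m by omega] at this
      have e1 : (m + 1) % 3 = 1 := by omega
      have e2 : (m + 1) / 3 = m / 3 := by omega
      refine ⟨?_, ?_, ?_⟩ <;> rw [hstep, hωm] <;>
        simp [ih0, ih1, ih2, hm, e1, e2]
    · have hωm : ω m = if ω' (m / 3) = 0 then 1 else 2 := by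
        have := hj.2.1
        rwa [show 3 * (m / 3) + 1 = m by omega] at this
      have e1 : (m + 1) % 3 = 2 := by omega
      have e2 : (m + 1) / 3 = m / 3 := by omega
      rcases fin2 (ω' (m / 3)) with hb | hb <;>
        simp only [hb, if_pos rfl, if_neg (by decide : ¬ ((1:Fin 2) = 0))] at hωm <;>
        refine ⟨?_, ?_, ?_⟩ <;> rw [hstep, hωm] <;>
        simp [ih0, ih1, ih2, hm, e1, e2, hb]
    · have hωm : ω m = if ω' (m / 3) = 0 then 2 else 1 := by
        have := hj.2.2
        rwa [show 3 * (m / 3) + 2 = m by omega] at this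
      have e1 : (m + 1) % 3 = 0 := by omega
      have e2 : (m + 1) / 3 = m / 3 + 1 := by omega
      rcases fin2 (ω' (m / 3)) with hb | hb <;>
        simp only [hb, if_pos rfl, if_neg (by decide : ¬ ((1:Fin 2) = 0))] at hωm <;>
        refine ⟨?_, ?_, ?_⟩ <;> rw [hstep, hωm] <;>
        simp [ih0, ih1, ih2, hm, e1, e2, hb]

lemma veq (c : Fin 3 → ℕ) (x y z : ℕ) :
    c = ![x, y, z] ↔ c 0 = x ∧ c 1 = y ∧ c 2 = z := by
  constructor
  · rintro rfl; exact ⟨rfl, rfl, rfl⟩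
  · rintro ⟨h0, h1, h2⟩; funext a; fin_cases a <;> simpa

/-- Let `ω'` be an aperiodic binary word and let `ω` be its image under
the morphism `0 ↦ 012`, `1 ↦ 021`. Then `ρ^ab_ω(n) = 3` for all `n ≥ 1`. -/
theorem abelianComplexity_of_f_image
    (ω' : ℕ → Fin 2) (hap : ¬ UltimatelyPeriodic ω') (ω : ℕ → Fin 3)
    (hω : ∀ i : ℕ,
      ω (3 * i) = 0 ∧
      ω (3 * i + 1) = (if ω' i = 0 then 1 else 2) ∧
      ω (3 * i + 2) = (if ω' i = 0 then 2 else 1)) :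
    ∀ n : ℕ, 1 ≤ n → abelianComplexity ω n = 3 := by
  intro n hn
  have fin2 : ∀ b : Fin 2, b = 0 ∨ b = 1 := by decide
  have P := Pform ω' ω hω
  unfold abelianComplexity
  rw [Set.ncard_eq_three]
  have hm3 : n % 3 = 0 ∨ n % 3 = 1 ∨ n % 3 = 2 := by omega
  rcases hm3 with hr | hr | hr
  · -- r = 0
    refine ⟨![n/3, n/3, n/3], ![n/3, n/3+1, n/3-1], ![n/3, n/3-1, n/3+1], ?_, ?_, ?_, ?_⟩
    · intro h; have := congrFun h 1; simp at this
    · intro h; have := congrFun h 1; simp at this; omega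
    · intro h; have := congrFun h 1; simp at this; omega
    · ext c
      simp only [Set.mem_setOf_eq, Set.mem_insert_iff, Set.mem_singleton_iff]
      constructor
      · rintro ⟨i, rfl⟩
        rw [veq, veq, veq]
        have E0 := count_add ω i n 0
        have E1 := count_add ω i n 1
        have E2 := count_add ω i n 2
        rw [(P i).1, (P (i+n)).1] at E0
        rw [(P i).2.1, (P (i+n)).2.1] at E1
        rw [(P i).2.2, (P (i+n)).2.2] at E2
        rcases fin2 (ω' (i/3)) with hb | hb <;> rcases fin2 (ω' ((i+n)/3)) with hb' | hb' <;>
          simp [hb, hb'] at E1 E2 <;>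
          split_ifs at E0 E1 E2 <;>
          omega
      · have hq : 0 < n / 3 := by omega
        rintro (rfl | rfl | rfl)
        · refine ⟨0, ?_⟩
          rw [eq_comm]
          simp only [veq]
          rw [(P n).1, (P n).2.1, (P n).2.2]
          simp [hr]
        · obtain ⟨k, hk1, hk2⟩ := exists_flip ω' hap (n/3) hq 1
          have hk2' : ω' (k + n/3) = 0 := by
            rcases fin2 (ω' (k + n/3)) with h | h
            · exact h
            · exact absurd h hk2
          refine ⟨3*k+2, ?_⟩
          rw [eq_comm]
          simp only [veq]
          have E0 := count_add ω (3*k+2) n 0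
          have E1 := count_add ω (3*k+2) n 1
          have E2 := count_add ω (3*k+2) n 2
          rw [(P (3*k+2)).1, (P (3*k+2+n)).1] at E0
          rw [(P (3*k+2)).2.1, (P (3*k+2+n)).2.1] at E1
          rw [(P (3*k+2)).2.2, (P (3*k+2+n)).2.2] at E2
          rw [show (3*k+2)/3 = k by omega, show (3*k+2+n)/3 = k + n/3 by omega] at E1 E2
          have m1 : (3*k+2) % 3 = 2 := by omega
          have m2 : (3*k+2+n) % 3 = 2 := by omega
          simp [m1, m2, hk1, hk2'] at E0 E1 E2
          refine ⟨by omega, by omega, by omega⟩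
        · obtain ⟨k, hk1, hk2⟩ := exists_flip ω' hap (n/3) hq 0
          have hk2' : ω' (k + n/3) = 1 := by
            rcases fin2 (ω' (k + n/3)) with h | h
            · exact absurd h hk2
            · exact h
          refine ⟨3*k+2, ?_⟩
          rw [eq_comm]
          simp only [veq]
          have E0 := count_add ω (3*k+2) n 0
          have E1 := count_add ω (3*k+2) n 1
          have E2 := count_add ω (3*k+2) n 2
          rw [(P (3*k+2)).1, (P (3*k+2+n)).1] at E0
          rw [(P (3*k+2)).2.1, (P (3*k+2+n)).2.1] at E1
          rw [(P (3*k+2)).2.2, (P (3*k+2+n)).2.2] at E2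
          rw [show (3*k+2)/3 = k by omega, show (3*k+2+n)/3 = k + n/3 by omega] at E1 E2
          have m1 : (3*k+2) % 3 = 2 := by omega
          have m2 : (3*k+2+n) % 3 = 2 := by omega
          simp [m1, m2, hk1, hk2'] at E0 E1 E2
          refine ⟨by omega, by omega, by omega⟩
  · -- r = 1
    refine ⟨![n/3+1, n/3, n/3], ![n/3, n/3+1, n/3], ![n/3, n/3, n/3+1], ?_, ?_, ?_, ?_⟩
    · intro h; have := congrFun h 0; simp at this
    · intro h; have := congrFun h 0; simp at this
    · intro h; have := congrFun h 1; simp at this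
    · ext c
      simp only [Set.mem_setOf_eq, Set.mem_insert_iff, Set.mem_singleton_iff]
      constructor
      · rintro ⟨i, rfl⟩
        rw [veq, veq, veq]
        have E0 := count_add ω i n 0
        have E1 := count_add ω i n 1
        have E2 := count_add ω i n 2
        rw [(P i).1, (P (i+n)).1] at E0
        rw [(P i).2.1, (P (i+n)).2.1] at E1
        rw [(P i).2.2, (P (i+n)).2.2] at E2
        rcases fin2 (ω' (i/3)) with hb | hb <;> rcases fin2 (ω' ((i+n)/3)) with hb' | hb' <;>
          simp [hb, hb'] at E1 E2 <;>
          split_ifs at E0 E1 E2 <;>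
          omega
      · rintro (rfl | rfl | rfl)
        · refine ⟨0, ?_⟩
          rw [eq_comm]
          simp only [veq]
          rw [(P n).1, (P n).2.1, (P n).2.2]
          simp [hr]
        · obtain ⟨k, _, hk1⟩ := exists_ge ω' hap 1 0
          refine ⟨3*k+2, ?_⟩
          rw [eq_comm]
          simp only [veq]
          have E0 := count_add ω (3*k+2) n 0
          have E1 := count_add ω (3*k+2) n 1
          have E2 := count_add ω (3*k+2) n 2
          rw [(P (3*k+2)).1, (P (3*k+2+n)).1] at E0
          rw [(P (3*k+2)).2.1, (P (3*k+2+n)).2.1] at E1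
          rw [(P (3*k+2)).2.2, (P (3*k+2+n)).2.2] at E2
          rw [show (3*k+2)/3 = k by omega] at E1 E2
          have m1 : (3*k+2) % 3 = 2 := by omega
          have m2 : (3*k+2+n) % 3 = 0 := by omega
          simp [m1, m2, hk1] at E0 E1 E2
          refine ⟨by omega, by omega, by omega⟩
        · obtain ⟨k, _, hk1⟩ := exists_ge ω' hap 0 0
          refine ⟨3*k+2, ?_⟩
          rw [eq_comm]
          simp only [veq]
          have E0 := count_add ω (3*k+2) n 0
          have E1 := count_add ω (3*k+2) n 1
          have E2 := count_add ω (3*k+2) n 2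
          rw [(P (3*k+2)).1, (P (3*k+2+n)).1] at E0
          rw [(P (3*k+2)).2.1, (P (3*k+2+n)).2.1] at E1
          rw [(P (3*k+2)).2.2, (P (3*k+2+n)).2.2] at E2
          rw [show (3*k+2)/3 = k by omega] at E1 E2
          have m1 : (3*k+2) % 3 = 2 := by omega
          have m2 : (3*k+2+n) % 3 = 0 := by omega
          simp [m1, m2, hk1] at E0 E1 E2
          refine ⟨by omega, by omega, by omega⟩
  · -- r = 2
    refine ⟨![n/3+1, n/3+1, n/3], ![n/3+1, n/3, n/3+1], ![n/3, n/3+1, n/3+1], ?_, ?_, ?_, ?_⟩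
    · intro h; have := congrFun h 1; simp at this
    · intro h; have := congrFun h 0; simp at this
    · intro h; have := congrFun h 1; simp at this
    · ext c
      simp only [Set.mem_setOf_eq, Set.mem_insert_iff, Set.mem_singleton_iff]
      constructor
      · rintro ⟨i, rfl⟩
        rw [veq, veq, veq]
        have E0 := count_add ω i n 0
        have E1 := count_add ω i n 1
        have E2 := count_add ω i n 2
        rw [(P i).1, (P (i+n)).1] at E0
        rw [(P i).2.1, (P (i+n)).2.1] at E1
        rw [(P i).2.2, (P (i+n)).2.2] at E2
        rcases fin2 (ω' (i/3)) with hb | hb <;> rcases fin2 (ω' ((i+n)/3)) with hb' | hb' <;>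
          simp [hb, hb'] at E1 E2 <;>
          split_ifs at E0 E1 E2 <;>
          omega
      · rintro (rfl | rfl | rfl)
        · obtain ⟨m, hm, hm0⟩ := exists_ge ω' hap 0 (n/3)
          refine ⟨3*(m - n/3), ?_⟩
          rw [eq_comm]
          simp only [veq]
          have E0 := count_add ω (3*(m - n/3)) n 0
          have E1 := count_add ω (3*(m - n/3)) n 1
          have E2 := count_add ω (3*(m - n/3)) n 2
          rw [(P (3*(m - n/3))).1, (P (3*(m - n/3)+n)).1] at E0
          rw [(P (3*(m - n/3))).2.1, (P (3*(m - n/3)+n)).2.1] at E1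
          rw [(P (3*(m - n/3))).2.2, (P (3*(m - n/3)+n)).2.2] at E2
          rw [show (3*(m - n/3)+n)/3 = m by omega] at E1 E2
          have m1 : (3*(m - n/3)) % 3 = 0 := by omega
          have m2 : (3*(m - n/3)+n) % 3 = 2 := by omega
          simp [m1, m2, hm0] at E0 E1 E2
          refine ⟨by omega, by omega, by omega⟩
        · obtain ⟨m, hm, hm0⟩ := exists_ge ω' hap 1 (n/3)
          refine ⟨3*(m - n/3), ?_⟩
          rw [eq_comm]
          simp only [veq]
          have E0 := count_add ω (3*(m - n/3)) n 0
          have E1 := count_add ω (3*(m - n/3)) n 1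
          have E2 := count_add ω (3*(m - n/3)) n 2
          rw [(P (3*(m - n/3))).1, (P (3*(m - n/3)+n)).1] at E0
          rw [(P (3*(m - n/3))).2.1, (P (3*(m - n/3)+n)).2.1] at E1
          rw [(P (3*(m - n/3))).2.2, (P (3*(m - n/3)+n)).2.2] at E2
          rw [show (3*(m - n/3)+n)/3 = m by omega] at E1 E2
          have m1 : (3*(m - n/3)) % 3 = 0 := by omega
          have m2 : (3*(m - n/3)+n) % 3 = 2 := by omega
          simp [m1, m2, hm0] at E0 E1 E2
          refine ⟨by omega, by omega, by omega⟩
        · refine ⟨1, ?_⟩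
          rw [eq_comm]
          simp only [veq]
          have E0 := count_add ω 1 n 0
          have E1 := count_add ω 1 n 1
          have E2 := count_add ω 1 n 2
          rw [(P 1).1, (P (1+n)).1] at E0
          rw [(P 1).2.1, (P (1+n)).2.1] at E1
          rw [(P 1).2.2, (P (1+n)).2.2] at E2
          have m2 : (1+n) % 3 = 0 := by omega
          simp [m2] at E0 E1 E2
          refine ⟨by omega, by omega, by omega⟩
end

section
/- The ultimately periodic binary word w = 0110(1001)(1001)(1001)⋯ = 0110(1001)^∞ has the same abelian complexity as the Thue-Morse word: ρ^ab_w(n) = 2 for all odd n and ρ^ab_w(n) = 3 for all even n ≥ 2. -/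
/-- The ultimately periodic word `0110(1001)^∞`. -/
def w : ℕ → Fin 2 := fun n =>
  if n < 4 then (if n = 0 ∨ n = 3 then 0 else 1)
  else (if n % 4 = 0 ∨ n % 4 = 3 then 1 else 0)

/-- Prefix counts of ones. -/
def S (n : ℕ) : ℕ := (factor w 0 n).count 1

lemma w_period {j : ℕ} (h : 4 ≤ j) : w (j + 4) = w j := by
  have h1 : ¬ (j + 4 < 4) := by omega
  have h2 : ¬ (j < 4) := by omega
  have h3 : (j + 4) % 4 = j % 4 := by omega
  simp only [w, if_neg h1, if_neg h2, h3]

lemma factor_shift {i : ℕ} (h : 4 ≤ i) (n : ℕ) : factor w (i + 4) n = factor w i n := by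
  unfold factor
  apply List.map_congr_left
  intro j hj
  have : i + 4 + j = (i + j) + 4 := by omega
  rw [this, w_period (by omega)]

lemma reduce (n i : ℕ) : ∃ i' < 8, factor w i n = factor w i' n := by
  induction i using Nat.strong_induction_on with
  | _ i ih =>
    by_cases h : i < 8
    · exact ⟨i, h, rfl⟩
    · obtain ⟨i', hi', he⟩ := ih (i - 4) (by omega)
      have h4 : i - 4 + 4 = i := by omega
      exact ⟨i', hi', by rw [← h4, factor_shift (by omega)]; exact he⟩

lemma factor_split (i n : ℕ) : factor w 0 (i + n) = factor w 0 i ++ factor w i n := by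
  unfold factor
  rw [List.range_add, List.map_append, List.map_map]
  simp [Function.comp_def]

lemma split_count (i n : ℕ) : S i + (factor w i n).count 1 = S (i + n) := by
  unfold S
  rw [factor_split, List.count_append]

lemma S_eq (n : ℕ) : S n = if n = 1 then 0 else if n = 3 then 2 else (n + 3) / 4 + n / 4 := by
  induction n with
  | zero => simp [S, factor]
  | succ n ih =>
    have hstep : S (n + 1) = S n + (factor w n 1).count 1 := (split_count n 1).symm
    have hone : (factor w n 1).count 1
        = if (n < 4 ∧ (n = 1 ∨ n = 2)) ∨ (4 ≤ n ∧ (n % 4 = 0 ∨ n % 4 = 3)) then 1 else 0 := by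
      have hf : factor w n 1 = [w n] := by simp [factor, List.range_succ]
      rw [hf]
      unfold w
      split_ifs <;> simp_all <;> omega
    rw [hstep, hone, ih]
    split_ifs <;> omega

lemma count_sum (l : List (Fin 2)) : l.count 0 + l.count 1 = l.length := by
  induction l with
  | nil => simp
  | cons a t ih =>
    fin_cases a <;> simp [List.count_cons] <;> omega

lemma len_factor (i n : ℕ) : (factor w i n).length = n := by simp [factor]

lemma countFn_eq (i n : ℕ) :
    (fun a => (factor w i n).count a) =
    (fun a : Fin 2 => if a = 1 then (factor w i n).count 1 else n - (factor w i n).count 1) := by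
  funext a
  have h := count_sum (factor w i n)
  rw [len_factor] at h
  by_cases ha : a = 1
  · subst ha; simp
  · have ha0 : a = 0 := by
      have h2 := a.isLt
      have h3 : a.val ≠ 1 := fun hv => ha (Fin.ext hv)
      exact Fin.ext (by omega)
    subst ha0
    rw [if_neg (by decide)]
    omega

lemma main_card (n : ℕ) :
    abelianComplexity w n = Set.ncard {k : ℕ | ∃ i, (factor w i n).count 1 = k} := by
  unfold abelianComplexity
  have himg : {c : Fin 2 → ℕ | ∃ i : ℕ, c = fun a => (factor w i n).count a}
      = (fun k => fun a : Fin 2 => if a = 1 then k else n - k)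
        '' {k : ℕ | ∃ i, (factor w i n).count 1 = k} := by
    ext c
    constructor
    · rintro ⟨i, rfl⟩
      exact ⟨(factor w i n).count 1, ⟨i, rfl⟩, (countFn_eq i n).symm⟩
    · rintro ⟨k, ⟨i, rfl⟩, rfl⟩
      exact ⟨i, (countFn_eq i n).symm⟩
  rw [himg, Set.ncard_image_of_injective]
  intro k1 k2 h
  simpa using congrFun h 1

/-- The ultimately periodic word `0110(1001)^∞` has the same abelian complexity
as the Thue-Morse word: `2` at odd lengths and `3` at even lengths `≥ 2`. -/
theorem abelianComplexity_of_w :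
    (∀ n : ℕ, Odd n → abelianComplexity w n = 2) ∧
    (∀ n : ℕ, Even n → 2 ≤ n → abelianComplexity w n = 3) := by
  constructor
  · intro n hodd
    rw [Nat.odd_iff] at hodd
    rw [main_card]
    have hK : {k : ℕ | ∃ i, (factor w i n).count 1 = k} = {(n - 1) / 2, (n + 1) / 2} := by
      ext k
      simp only [Set.mem_setOf_eq, Set.mem_insert_iff, Set.mem_singleton_iff]
      constructor
      · rintro ⟨i, rfl⟩
        obtain ⟨i', hi8, hfe⟩ := reduce n i
        rw [hfe]
        have hsum := split_count i' n
        interval_cases i' <;>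
          (simp only [S_eq] at hsum; split_ifs at hsum <;> omega)
      · intro hk
        have h4 : n % 4 = 1 ∨ n % 4 = 3 := by omega
        rcases hk with rfl | rfl
        · refine ⟨5, ?_⟩
          have hsum := split_count 5 n
          simp only [S_eq] at hsum
          split_ifs at hsum <;> omega
        · rcases h4 with h4 | h4
          · refine ⟨4, ?_⟩
            have hsum := split_count 4 n
            simp only [S_eq] at hsum
            split_ifs at hsum <;> omega
          · refine ⟨6, ?_⟩
            have hsum := split_count 6 n
            simp only [S_eq] at hsum
            split_ifs at hsum <;> omega
    rw [hK, Set.ncard_pair (by omega)]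
  · intro n heven hn2
    rw [Nat.even_iff] at heven
    rw [main_card]
    have hK : {k : ℕ | ∃ i, (factor w i n).count 1 = k}
        = {n / 2 - 1, n / 2, n / 2 + 1} := by
      ext k
      simp only [Set.mem_setOf_eq, Set.mem_insert_iff, Set.mem_singleton_iff]
      constructor
      · rintro ⟨i, rfl⟩
        obtain ⟨i', hi8, hfe⟩ := reduce n i
        rw [hfe]
        have hsum := split_count i' n
        interval_cases i' <;>
          (simp only [S_eq] at hsum; split_ifs at hsum <;> omega)
      · intro hk
        have h4 : n % 4 = 0 ∨ n % 4 = 2 := by omega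
        rcases hk with rfl | rfl | rfl
        · rcases h4 with h4 | h4
          · refine ⟨3, ?_⟩
            have hsum := split_count 3 n
            simp only [S_eq] at hsum
            split_ifs at hsum <;> omega
          · refine ⟨5, ?_⟩
            have hsum := split_count 5 n
            simp only [S_eq] at hsum
            split_ifs at hsum <;> omega
        · refine ⟨4, ?_⟩
          have hsum := split_count 4 n
          simp only [S_eq] at hsum
          split_ifs at hsum <;> omega
        · rcases h4 with h4 | h4
          · refine ⟨1, ?_⟩
            have hsum := split_count 1 n
            simp only [S_eq] at hsum
            split_ifs at hsum <;> omega
          · refine ⟨7, ?_⟩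
            have hsum := split_count 7 n
            simp only [S_eq] at hsum
            split_ifs at hsum <;> omega
    rw [hK, Set.ncard_insert_of_notMem (by simp; omega) (Set.toFinite _),
      Set.ncard_pair (by omega)]
end
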